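/- Let R be an integral domain, S an integral domain which is an R-algebra via φ : R → S, and a ∈ R such that φ(a) has a square root β in S. Then the induced R-algebra homomorphism Ψ : R[X]/(X²-a) → S sending X to β is injective if and only if φ is injective and a does not have a square root in Frac(R). -/

import Mathlib

open Polynomial

theorem stmt_5_aux_key (R : Type*) [CommRing R] [IsDomain R] (a c d : R) (hd : d ≠ 0) :
    ¬ ((X : R[X]) ^ 2 - C a ∣ C d * X - C c) := by
  intro hdvd
  have hne : C d * X - C c ≠ 0 := by
    intro h
    have : (C d * X - C c).coeff 1 = 0 := by rw [h]; simp
    simp [coeff_sub, coeff_C_mul, coeff_X_one, hd] at this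
  have hle := degree_le_of_dvd hdvd hne
  rw [degree_X_pow_sub_C (by norm_num) a] at hle
  have h1 : (C d * X - C c).degree ≤ 1 := by
    refine le_trans (degree_sub_le _ _) ?_
    simp only [max_le_iff]
    constructor
    · exact le_trans (degree_mul_le _ _)
        (by simpa using add_le_add (degree_C_le (a := d)) (degree_X_le (R := R)))
    · exact le_trans degree_C_le (by norm_num)
  have := le_trans hle h1
  norm_num at this

/-- Let `R`, `S` be integral domains, `φ : R → S`, and `a ∈ R` with
`φ(a) = β²` for some `β ∈ S`.  The induced homomorphism `Ψ : R[X]/(X² - a) → S`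
(characterized by `Ψ ∘ (mk ∘ C) = φ` and `Ψ (mk X) = β`) is injective iff `φ` is
injective and `a` has no square root in `Frac(R)`. -/
theorem stmt_5 (R S : Type*) [CommRing R] [IsDomain R] [CommRing S] [IsDomain S]
    (φ : R →+* S) (a : R) (β : S) (hβ : φ a = β ^ 2)
    (Ψ : (R[X] ⧸ Ideal.span {(X : R[X]) ^ 2 - C a}) →+* S)
    (hΨC : ∀ r : R, Ψ (Ideal.Quotient.mk _ (C r)) = φ r)
    (hΨX : Ψ (Ideal.Quotient.mk _ (X : R[X])) = β) :
    Function.Injective Ψ ↔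
      Function.Injective φ ∧
        ¬∃ q : FractionRing R, q ^ 2 = algebraMap R (FractionRing R) a := by
  have hf : ((X : R[X]) ^ 2 - C a).Monic := monic_X_pow_sub_C a two_ne_zero
  have hmkf : Ideal.Quotient.mk (Ideal.span {(X : R[X]) ^ 2 - C a}) ((X : R[X]) ^ 2 - C a)
      = 0 := by
    rw [Ideal.Quotient.eq_zero_iff_mem]
    exact Ideal.subset_span rfl
  constructor
  · intro hinj
    constructor
    · intro r r' hrr'
      have h1 : Ψ (Ideal.Quotient.mk _ (C r)) = Ψ (Ideal.Quotient.mk _ (C r')) := by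
        rw [hΨC, hΨC, hrr']
      have h2 := hinj h1
      rw [Ideal.Quotient.eq] at h2
      have h3 : (X : R[X]) ^ 2 - C a ∣ C r - C r' := Ideal.mem_span_singleton.mp h2
      rw [← C_sub] at h3
      by_contra hne
      have hC : C (r - r') ≠ 0 := by
        simp only [ne_eq, C_eq_zero, sub_eq_zero]
        exact fun h => hne (by rw [h])
      have hle := degree_le_of_dvd h3 hC
      rw [degree_X_pow_sub_C (by norm_num) a] at hle
      have := le_trans hle (degree_C_le)
      norm_num at this
    · rintro ⟨q, hq⟩
      obtain ⟨c, d, hd, hcd⟩ := IsFractionRing.div_surjective (A := R) q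
      have hd0 : d ≠ 0 := nonZeroDivisors.ne_zero hd
      have hdK : algebraMap R (FractionRing R) d ≠ 0 := by
        simpa using fun h => hd0 (IsFractionRing.injective R (FractionRing R)
          (by simpa using h))
      have hca : c ^ 2 = a * d ^ 2 := by
        apply IsFractionRing.injective R (FractionRing R)
        rw [div_eq_iff hdK] at hcd
        rw [map_pow, map_mul, map_pow, hcd, ← hq]
        ring
      have hfac : (φ d * β - φ c) * (φ d * β + φ c) = 0 := by
        have h5 : φ (c ^ 2) = φ (a * d ^ 2) := by rw [hca]
        rw [map_pow, map_mul, map_pow, hβ] at h5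
        linear_combination -h5
      rcases mul_eq_zero.mp hfac with h | h
      · apply stmt_5_aux_key R a c d hd0
        rw [← Ideal.mem_span_singleton, ← Ideal.Quotient.eq_zero_iff_mem]
        apply hinj
        rw [map_zero]
        simp only [map_sub, map_mul, hΨC, hΨX]
        exact h
      · apply stmt_5_aux_key R a (-c) d hd0
        rw [← Ideal.mem_span_singleton, ← Ideal.Quotient.eq_zero_iff_mem]
        apply hinj
        rw [map_zero]
        simp only [map_sub, map_add, map_mul, map_neg, sub_neg_eq_add, hΨC, hΨX]
        exact h
  · rintro ⟨hφ, hsq⟩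
    rw [injective_iff_map_eq_zero]
    intro x hx
    obtain ⟨p, rfl⟩ := Ideal.Quotient.mk_surjective x
    set r : R[X] := p %ₘ ((X : R[X]) ^ 2 - C a) with hr_def
    have hmk : Ideal.Quotient.mk (Ideal.span {(X : R[X]) ^ 2 - C a}) p
        = Ideal.Quotient.mk _ r := by
      conv_lhs => rw [← modByMonic_add_div p ((X : R[X]) ^ 2 - C a)]
      rw [map_add, map_mul, hmkf, zero_mul, add_zero]
    have hrdeg : r.degree ≤ 1 := by
      have h6 := degree_modByMonic_lt p hf
      rw [degree_X_pow_sub_C (by norm_num) a] at h6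
      exact Order.lt_succ_iff.mp (by exact_mod_cast h6)
    have hrform := eq_X_add_C_of_degree_le_one hrdeg
    set r1 := r.coeff 1
    set r0 := r.coeff 0
    have hΨr : φ r1 * β + φ r0 = 0 := by
      rw [← hΨC r1, ← hΨC r0, ← hΨX, ← map_mul, ← map_mul, ← map_add, ← map_add,
        ← hrform, ← hmk, hx]
    have hr1 : r1 = 0 := by
      by_contra hr1
      apply hsq
      refine ⟨algebraMap R (FractionRing R) r0 / algebraMap R (FractionRing R) r1, ?_⟩
      have hr1K : algebraMap R (FractionRing R) r1 ≠ 0 := by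
        simpa using fun h => hr1 (IsFractionRing.injective R (FractionRing R)
          (by simpa using h))
      have hra : r0 ^ 2 = a * r1 ^ 2 := by
        apply hφ
        rw [map_pow, map_mul, map_pow, hβ]
        have hneg : φ r1 * β = - φ r0 := eq_neg_of_add_eq_zero_left hΨr
        calc φ r0 ^ 2 = (φ r1 * β) ^ 2 := by rw [hneg]; ring
          _ = β ^ 2 * φ r1 ^ 2 := by ring
      rw [div_pow, div_eq_iff (pow_ne_zero 2 hr1K), ← map_pow, ← map_pow, ← map_mul, hra]
    have hr0 : r0 = 0 := by
      apply hφ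
      rw [map_zero]
      have h7 := hΨr
      rw [hr1, map_zero, zero_mul, zero_add] at h7
      exact h7
    rw [hmk, hrform, hr1, hr0]
    simp
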